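/- Let X be a normed space, Y a vector space, X̃ ⊆ X a linear subspace, and G : [0,τ] × X × Y → ℝ a Lagrangian such that for all t, u⁰, uᵗ, p the map s ↦ G(t, s·uᵗ + (1−s)·u⁰, p) is absolutely continuous on [0,1] with derivative s ↦ ∂ᵤG(t, s·uᵗ+(1−s)·u⁰, p)(uᵗ−u⁰) which is integrable. If uᵗ − u⁰ ∈ X̃ and qᵗ ∈ Y satisfies the averaged adjoint equation ∫₀¹ ∂ᵤG(t, s·uᵗ + (1−s)·u⁰, qᵗ)(φ) ds = 0 for all φ ∈ X̃, then G(t, uᵗ, qᵗ) = G(t, u⁰, qᵗ). -/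

import Mathlib

/-- Averaged adjoint reparametrisation (Lemma 2.4): if `qᵗ` solves the averaged
adjoint equation for the pair `(u⁰, uᵗ)` and `uᵗ − u⁰` lies in the test subspace `X̃`,
then `G(t, uᵗ, qᵗ) = G(t, u⁰, qᵗ)`.  Here `dG t u p v` denotes the one-sided
directional derivative `∂ᵤG(t,u,p)(v)`, and the (H1)-type regularity is encoded via
`hdir`, `hderiv` and `hint`. -/
theorem stmt_1 {X : Type*} [NormedAddCommGroup X] [NormedSpace ℝ X] {Y : Type*}
    (τ : ℝ) (hτ : 0 < τ) (G : ℝ → X → Y → ℝ) (dG : ℝ → X → Y → X → ℝ)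
    (Xt : Submodule ℝ X)
    (t : ℝ) (ht : t ∈ Set.Icc 0 τ) (u0 ut : X) (qt : Y)
    -- `dG` is the one-sided directional derivative of `G` in the second variable:
    (hdir : ∀ s ∈ Set.Icc (0:ℝ) 1, ∀ v : X,
      Filter.Tendsto
        (fun h : ℝ =>
          (G t ((s • ut + (1 - s) • u0) + h • v) qt
            - G t (s • ut + (1 - s) • u0) qt) / h)
        (nhdsWithin 0 (Set.Ioi 0)) (nhds (dG t (s • ut + (1 - s) • u0) qt v)))
    -- absolute continuity of `s ↦ G(t, s uᵗ + (1−s) u⁰, qᵗ)` with derivative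
    -- `s ↦ ∂ᵤG(t, s uᵗ + (1−s) u⁰, qᵗ)(uᵗ − u⁰)`:
    (hderiv : ∀ s ∈ Set.Icc (0:ℝ) 1,
      HasDerivWithinAt (fun s : ℝ => G t (s • ut + (1 - s) • u0) qt)
        (dG t (s • ut + (1 - s) • u0) qt (ut - u0)) (Set.Icc (0:ℝ) 1) s)
    (hint : ∀ v : X,
      IntervalIntegrable (fun s => dG t (s • ut + (1 - s) • u0) qt v)
        MeasureTheory.volume 0 1)
    -- `uᵗ − u⁰` belongs to the test subspace:
    (hmem : ut - u0 ∈ Xt)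
    -- the averaged adjoint equation:
    (hAAE : ∀ φ ∈ Xt, (∫ s in (0:ℝ)..1, dG t (s • ut + (1 - s) • u0) qt φ) = 0) :
    G t ut qt = G t u0 qt := by
  set f : ℝ → ℝ := fun s : ℝ => G t (s • ut + (1 - s) • u0) qt with hf
  have key : (∫ s in (0:ℝ)..1, dG t (s • ut + (1 - s) • u0) qt (ut - u0))
      = f 1 - f 0 := by
    apply intervalIntegral.integral_eq_sub_of_hasDeriv_right_of_le (by norm_num)
    · exact fun s hs => ((hderiv s hs).continuousWithinAt).mono (by norm_num)
    · intro s hs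
      exact (hderiv s (Set.mem_Icc_of_Ioo hs)).mono_of_mem_nhdsWithin
        (Icc_mem_nhdsGT_of_mem ⟨le_of_lt hs.1, hs.2⟩)
    · exact hint (ut - u0)
  have h0 := hAAE (ut - u0) hmem
  rw [h0] at key
  have : f 1 = f 0 := by linarith
  simpa [hf] using this
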